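/- For every α, β ∈ {−1, 1}: (i) a three-element subset of the configuration D_{α,β} is collinear in ℙ²(ℝ) if and only if it is one of the eighteen triples {V₁,S₁,S₄}, {V₁,S₂,S₃}, {V₁,S₅,S₇}, {V₁,S₆,S₁₀}, {V₁,S₈,S₉}, {V₁,S₁₁,S₁₂}, {V₂,S₁,S₂}, {V₂,S₃,S₆}, {V₂,S₄,S₁₂}, {V₂,S₅,S₈}, {V₂,S₇,S₉}, {V₂,S₁₀,S₁₁}, {V₃,S₁,S₃}, {V₃,S₂,S₅}, {V₃,S₄,S₉}, {V₃,S₆,S₁₁}, {V₃,S₇,S₈}, {V₃,S₁₀,S₁₂}; and (ii) every bijection f of D_{α,β} preserving collinearity of triples in both directions satisfies f({V₁,V₂,V₃}) = {V₁,V₂,V₃}. -/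

import Mathlib

noncomputable section

/-- The real projective plane `ℙ²(ℝ)`. -/
abbrev ProjPlaneR := Projectivization ℝ (Fin 3 → ℝ)

/-- A vector `![a,b,c]` with a nonzero coordinate is nonzero. -/
theorem vne (a b c : ℝ) (i : Fin 3) (h : ![a, b, c] i ≠ 0) : ![a, b, c] ≠ 0 :=
  fun he => h (by rw [he]; simp)

/-- The point `(a : b : c)` of `ℙ²(ℝ)`. -/
def mkP (a b c : ℝ) (h : ![a, b, c] ≠ 0) : ProjPlaneR :=
  Projectivization.mk ℝ ![a, b, c] h

/-- A set of points of `ℙ²(ℝ)` lies on a common projective line iff some nonzero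
linear form vanishes on (representatives of) all of them. -/
def ProjCollinear (s : Set ProjPlaneR) : Prop :=
  ∃ f : (Fin 3 → ℝ) →ₗ[ℝ] ℝ, f ≠ 0 ∧ ∀ p ∈ s, f p.rep = 0

/-! The points of the configuration `D_{α,β}`. -/

def V₁ : ProjPlaneR := mkP 0 0 1 (vne _ _ _ 2 (by simp))
def V₂ : ProjPlaneR := mkP 1 0 0 (vne _ _ _ 0 (by norm_num))
def V₃ : ProjPlaneR := mkP 0 1 0 (vne _ _ _ 1 (by norm_num))
def S₁ : ProjPlaneR := mkP 1 1 1 (vne _ _ _ 0 (by norm_num))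
def S₂ : ProjPlaneR := mkP 4 1 1 (vne _ _ _ 0 (by norm_num))
def S₃ : ProjPlaneR := mkP 4 1 4 (vne _ _ _ 0 (by norm_num))
def S₄ : ProjPlaneR := mkP 2 2 1 (vne _ _ _ 0 (by norm_num))
def S₅ : ProjPlaneR := mkP 4 (-2) 1 (vne _ _ _ 0 (by norm_num))
def S₆ : ProjPlaneR := mkP (-1) 1 4 (vne _ _ _ 0 (by norm_num))
def S₇ (α : ℝ) : ProjPlaneR := mkP 4 (-2) (α * Real.sqrt 2) (vne _ _ _ 0 (by norm_num))
def S₈ (α : ℝ) : ProjPlaneR := mkP (2 * α * Real.sqrt 2) (-2) 1 (vne _ _ _ 1 (by norm_num))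
def S₉ (α : ℝ) : ProjPlaneR := mkP 2 (-(α * Real.sqrt 2)) 1 (vne _ _ _ 0 (by norm_num))
def S₁₀ (β : ℝ) : ProjPlaneR := mkP (-1) 1 (β * Real.sqrt 2) (vne _ _ _ 0 (by norm_num))
def S₁₁ (β : ℝ) : ProjPlaneR := mkP (-1) (2 * β * Real.sqrt 2) 4 (vne _ _ _ 0 (by norm_num))
def S₁₂ (β : ℝ) : ProjPlaneR := mkP (-(β * Real.sqrt 2)) 4 2 (vne _ _ _ 1 (by norm_num))

/-- The configuration `D_{α,β}` as a set of 15 points of `ℙ²(ℝ)`. -/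
def Dconf (α β : ℝ) : Set ProjPlaneR :=
  {V₁, V₂, V₃, S₁, S₂, S₃, S₄, S₅, S₆, S₇ α, S₈ α, S₉ α, S₁₀ β, S₁₁ β, S₁₂ β}


/-! ### Auxiliary machinery for Statement 16 -/

abbrev Z2 := Zsqrtd 2

def st16Sg : Bool → ℤ := fun t => bif t then 1 else -1

def st16Vz (t u : Bool) : Fin 15 → Fin 3 → Z2
  | ⟨0,_⟩ => ![⟨0,0⟩,⟨0,0⟩,⟨1,0⟩]
  | ⟨1,_⟩ => ![⟨1,0⟩,⟨0,0⟩,⟨0,0⟩]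
  | ⟨2,_⟩ => ![⟨0,0⟩,⟨1,0⟩,⟨0,0⟩]
  | ⟨3,_⟩ => ![⟨1,0⟩,⟨1,0⟩,⟨1,0⟩]
  | ⟨4,_⟩ => ![⟨4,0⟩,⟨1,0⟩,⟨1,0⟩]
  | ⟨5,_⟩ => ![⟨4,0⟩,⟨1,0⟩,⟨4,0⟩]
  | ⟨6,_⟩ => ![⟨2,0⟩,⟨2,0⟩,⟨1,0⟩]
  | ⟨7,_⟩ => ![⟨4,0⟩,⟨-2,0⟩,⟨1,0⟩]
  | ⟨8,_⟩ => ![⟨-1,0⟩,⟨1,0⟩,⟨4,0⟩]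
  | ⟨9,_⟩ => ![⟨4,0⟩,⟨-2,0⟩,⟨0,st16Sg t⟩]
  | ⟨10,_⟩ => ![⟨0,2*st16Sg t⟩,⟨-2,0⟩,⟨1,0⟩]
  | ⟨11,_⟩ => ![⟨2,0⟩,⟨0,-st16Sg t⟩,⟨1,0⟩]
  | ⟨12,_⟩ => ![⟨-1,0⟩,⟨1,0⟩,⟨0,st16Sg u⟩]
  | ⟨13,_⟩ => ![⟨-1,0⟩,⟨0,2*st16Sg u⟩,⟨4,0⟩]
  | ⟨14,_⟩ => ![⟨0,-st16Sg u⟩,⟨4,0⟩,⟨2,0⟩]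
  | ⟨n+15,h⟩ => absurd h (by omega)

def st16PtR (α β : ℝ) : Fin 15 → ProjPlaneR
  | ⟨0,_⟩ => V₁
  | ⟨1,_⟩ => V₂
  | ⟨2,_⟩ => V₃
  | ⟨3,_⟩ => S₁
  | ⟨4,_⟩ => S₂
  | ⟨5,_⟩ => S₃
  | ⟨6,_⟩ => S₄
  | ⟨7,_⟩ => S₅
  | ⟨8,_⟩ => S₆
  | ⟨9,_⟩ => S₇ α
  | ⟨10,_⟩ => S₈ α
  | ⟨11,_⟩ => S₉ α
  | ⟨12,_⟩ => S₁₀ β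
  | ⟨13,_⟩ => S₁₁ β
  | ⟨14,_⟩ => S₁₂ β
  | ⟨n+15,h⟩ => absurd h (by omega)

def st16Det {R : Type} [CommRing R] (x y z : Fin 3 → R) : R :=
  x 0 * (y 1 * z 2 - y 2 * z 1) - x 1 * (y 0 * z 2 - y 2 * z 0) + x 2 * (y 0 * z 1 - y 1 * z 0)

def st16Dz (t u : Bool) (i j k : Fin 15) : Z2 :=
  st16Det (st16Vz t u i) (st16Vz t u j) (st16Vz t u k)

def st16Tri (x y z i j k : Fin 15) : Prop :=
  (i=x∧j=y∧k=z)∨(i=x∧j=z∧k=y)∨(i=y∧j=x∧k=z)∨(i=y∧j=z∧k=x)∨(i=z∧j=x∧k=y)∨(i=z∧j=y∧k=x)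

def st16Good (i j k : Fin 15) : Prop :=
  st16Tri 0 3 6 i j k ∨
  st16Tri 0 4 5 i j k ∨
  st16Tri 0 7 9 i j k ∨
  st16Tri 0 8 12 i j k ∨
  st16Tri 0 10 11 i j k ∨
  st16Tri 0 13 14 i j k ∨
  st16Tri 1 3 4 i j k ∨
  st16Tri 1 5 8 i j k ∨
  st16Tri 1 6 14 i j k ∨
  st16Tri 1 7 10 i j k ∨
  st16Tri 1 9 11 i j k ∨
  st16Tri 1 12 13 i j k ∨
  st16Tri 2 3 5 i j k ∨
  st16Tri 2 4 7 i j k ∨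
  st16Tri 2 6 11 i j k ∨
  st16Tri 2 8 13 i j k ∨
  st16Tri 2 9 10 i j k ∨
  st16Tri 2 12 14 i j k

instance (x y z i j k : Fin 15) : Decidable (st16Tri x y z i j k) := by
  unfold st16Tri; infer_instance
instance (i j k : Fin 15) : Decidable (st16Good i j k) := by
  unfold st16Good; infer_instance

theorem st16Good_swap₁ (i j k : Fin 15) : st16Good j i k ↔ st16Good i j k := by
  constructor <;> (intro h; rcases h with (⟨rfl,rfl,rfl⟩|⟨rfl,rfl,rfl⟩|⟨rfl,rfl,rfl⟩|⟨rfl,rfl,rfl⟩|⟨rfl,rfl,rfl⟩|⟨rfl,rfl,rfl⟩)|(⟨rfl,rfl,rfl⟩|⟨rfl,rfl,rfl⟩|⟨rfl,rfl,rfl⟩|⟨rfl,rfl,rfl⟩|⟨rfl,rfl,rfl⟩|⟨rfl,rfl,rfl⟩)|(⟨rfl,rfl,rfl⟩|⟨rfl,rfl,rfl⟩|⟨rfl,rfl,rfl⟩|⟨rfl,rfl,rfl⟩|⟨rfl,rfl,rfl⟩|⟨rfl,rfl,rfl⟩)|(⟨rfl,rfl,rfl⟩|⟨rfl,rfl,r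fl⟩|⟨rfl,rfl,rfl⟩|⟨rfl,rfl,rfl⟩|⟨rfl,rfl,rfl⟩|⟨rfl,rfl,rfl⟩)|(⟨rfl,rfl,rfl⟩|⟨rfl,rfl,rfl⟩|⟨rfl,rfl,rfl⟩|⟨rfl,rfl,rfl⟩|⟨rfl,rfl,rfl⟩|⟨rfl,rfl,rfl⟩)|(⟨rfl,rfl,rfl⟩|⟨rfl,rfl,rfl⟩|⟨rfl,rfl,rfl⟩|⟨rfl,rfl,rfl⟩|⟨rfl,rfl,rfl⟩|⟨rfl,rfl,rfl⟩)|(⟨rfl,rfl,rfl⟩|⟨rfl,rfl,rfl⟩|⟨rfl,rfl,rfl⟩|⟨rfl,rfl,rfl⟩|⟨rfl,rfl,rfl⟩|⟨rfl,rfl,rfl⟩)|(⟨rfl,rfl,rfl⟩|⟨rfl,rfl,rfl⟩|⟨rfl,rfl,rfl⟩|⟨rfl,rfl,rfl⟩|⟨rfl,rfl,rfl⟩|⟨rfl,rfl,rfl⟩)|(⟨rfl,rfl,rfl⟩|⟨rfl,rfl,rfl⟩|⟨rfl,rfl,rfl⟩|⟨rfl,rfl,rfl⟩|⟨rfl,r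fl,rfl⟩|⟨rfl,rfl,rfl⟩)|(⟨rfl,rfl,rfl⟩|⟨rfl,rfl,rfl⟩|⟨rfl,rfl,rfl⟩|⟨rfl,rfl,rfl⟩|⟨rfl,rfl,rfl⟩|⟨rfl,rfl,rfl⟩)|(⟨rfl,rfl,rfl⟩|⟨rfl,rfl,rfl⟩|⟨rfl,rfl,rfl⟩|⟨rfl,rfl,rfl⟩|⟨rfl,rfl,rfl⟩|⟨rfl,rfl,rfl⟩)|(⟨rfl,rfl,rfl⟩|⟨rfl,rfl,rfl⟩|⟨rfl,rfl,rfl⟩|⟨rfl,rfl,rfl⟩|⟨rfl,rfl,rfl⟩|⟨rfl,rfl,rfl⟩)|(⟨rfl,rfl,rfl⟩|⟨rfl,rfl,rfl⟩|⟨rfl,rfl,rfl⟩|⟨rfl,rfl,rfl⟩|⟨rfl,rfl,rfl⟩|⟨rfl,rfl,rfl⟩)|(⟨rfl,rfl,rfl⟩|⟨rfl,rfl,rfl⟩|⟨rfl,rfl,rfl⟩|⟨rfl,rfl,rfl⟩|⟨rfl,rfl,rfl⟩|⟨rfl,rfl,rfl⟩)|(⟨rfl,rfl,rfl⟩|⟨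rfl,rfl,rfl⟩|⟨rfl,rfl,rfl⟩|⟨rfl,rfl,rfl⟩|⟨rfl,rfl,rfl⟩|⟨rfl,rfl,rfl⟩)|(⟨rfl,rfl,rfl⟩|⟨rfl,rfl,rfl⟩|⟨rfl,rfl,rfl⟩|⟨rfl,rfl,rfl⟩|⟨rfl,rfl,rfl⟩|⟨rfl,rfl,rfl⟩)|(⟨rfl,rfl,rfl⟩|⟨rfl,rfl,rfl⟩|⟨rfl,rfl,rfl⟩|⟨rfl,rfl,rfl⟩|⟨rfl,rfl,rfl⟩|⟨rfl,rfl,rfl⟩)|(⟨rfl,rfl,rfl⟩|⟨rfl,rfl,rfl⟩|⟨rfl,rfl,rfl⟩|⟨rfl,rfl,rfl⟩|⟨rfl,rfl,rfl⟩|⟨rfl,rfl,rfl⟩) <;> decide)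

theorem st16Good_swap₂ (i j k : Fin 15) : st16Good i k j ↔ st16Good i j k := by
  constructor <;> (intro h; rcases h with (⟨rfl,rfl,rfl⟩|⟨rfl,rfl,rfl⟩|⟨rfl,rfl,rfl⟩|⟨rfl,rfl,rfl⟩|⟨rfl,rfl,rfl⟩|⟨rfl,rfl,rfl⟩)|(⟨rfl,rfl,rfl⟩|⟨rfl,rfl,rfl⟩|⟨rfl,rfl,rfl⟩|⟨rfl,rfl,rfl⟩|⟨rfl,rfl,rfl⟩|⟨rfl,rfl,rfl⟩)|(⟨rfl,rfl,rfl⟩|⟨rfl,rfl,rfl⟩|⟨rfl,rfl,rfl⟩|⟨rfl,rfl,rfl⟩|⟨rfl,rfl,rfl⟩|⟨rfl,rfl,rfl⟩)|(⟨rfl,rfl,rfl⟩|⟨rfl,rfl,rfl⟩|⟨rfl,rfl,rfl⟩|⟨rfl,rfl,rfl⟩|⟨rfl,rfl,rfl⟩|⟨rfl,rfl,rfl⟩)|(⟨rfl,rfl,rfl⟩|⟨rfl,rfl,rfl⟩|⟨rfl,rfl,rfl⟩|⟨rfl,rfl,rfl⟩|⟨rfl,rfl,rfl⟩|⟨rf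l,rfl,rfl⟩)|(⟨rfl,rfl,rfl⟩|⟨rfl,rfl,rfl⟩|⟨rfl,rfl,rfl⟩|⟨rfl,rfl,rfl⟩|⟨rfl,rfl,rfl⟩|⟨rfl,rfl,rfl⟩)|(⟨rfl,rfl,rfl⟩|⟨rfl,rfl,rfl⟩|⟨rfl,rfl,rfl⟩|⟨rfl,rfl,rfl⟩|⟨rfl,rfl,rfl⟩|⟨rfl,rfl,rfl⟩)|(⟨rfl,rfl,rfl⟩|⟨rfl,rfl,rfl⟩|⟨rfl,rfl,rfl⟩|⟨rfl,rfl,rfl⟩|⟨rfl,rfl,rfl⟩|⟨rfl,rfl,rfl⟩)|(⟨rfl,rfl,rfl⟩|⟨rfl,rfl,rfl⟩|⟨rfl,rfl,rfl⟩|⟨rfl,rfl,rfl⟩|⟨rfl,rfl,rfl⟩|⟨rfl,rfl,rfl⟩)|(⟨rfl,rfl,rfl⟩|⟨rfl,rfl,rfl⟩|⟨rfl,rfl,rfl⟩|⟨rfl,rfl,rfl⟩|⟨rfl,rfl,rfl⟩|⟨rfl,rfl,rfl⟩)|(⟨rfl,rfl,rfl⟩|⟨rfl,rfl,rfl⟩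|⟨rfl,rfl,rfl⟩|⟨rfl,rfl,rfl⟩|⟨rfl,rfl,rfl⟩|⟨rfl,rfl,rfl⟩)|(⟨rfl,rfl,rfl⟩|⟨rfl,rfl,rfl⟩|⟨rfl,rfl,rfl⟩|⟨rfl,rfl,rfl⟩|⟨rfl,rfl,rfl⟩|⟨rfl,rfl,rfl⟩)|(⟨rfl,rfl,rfl⟩|⟨rfl,rfl,rfl⟩|⟨rfl,rfl,rfl⟩|⟨rfl,rfl,rfl⟩|⟨rfl,rfl,rfl⟩|⟨rfl,rfl,rfl⟩)|(⟨rfl,rfl,rfl⟩|⟨rfl,rfl,rfl⟩|⟨rfl,rfl,rfl⟩|⟨rfl,rfl,rfl⟩|⟨rfl,rfl,rfl⟩|⟨rfl,rfl,rfl⟩)|(⟨rfl,rfl,rfl⟩|⟨rfl,rfl,rfl⟩|⟨rfl,rfl,rfl⟩|⟨rfl,rfl,rfl⟩|⟨rfl,rfl,rfl⟩|⟨rfl,rfl,rfl⟩)|(⟨rfl,rfl,rfl⟩|⟨rfl,rfl,rfl⟩|⟨rfl,rfl,rfl⟩|⟨rfl,rfl,rfl⟩|⟨rfl,rfl,rfl⟩|⟨rfl,rfl,rfl⟩)|(⟨rfl,rfl,rfl⟩|⟨rfl,rfl,rfl⟩|⟨rfl,rfl,rfl⟩|⟨rfl,rfl,rfl⟩|⟨rfl,rfl,rfl⟩|⟨rfl,rfl,rfl⟩)|(⟨rfl,rfl,rfl⟩|⟨rfl,rfl,rfl⟩|⟨rfl,rfl,rfl⟩|⟨rfl,rfl,rfl⟩|⟨rfl,rfl,rfl⟩|⟨rfl,rfl,rfl⟩)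 <;> decide)

theorem st16Good_distinct : ∀ i j k : Fin 15, st16Good i j k → i ≠ j ∧ i ≠ k ∧ j ≠ k := by
  intro i j k h
  rcases h with (⟨rfl,rfl,rfl⟩|⟨rfl,rfl,rfl⟩|⟨rfl,rfl,rfl⟩|⟨rfl,rfl,rfl⟩|⟨rfl,rfl,rfl⟩|⟨rfl,rfl,rfl⟩)|(⟨rfl,rfl,rfl⟩|⟨rfl,rfl,rfl⟩|⟨rfl,rfl,rfl⟩|⟨rfl,rfl,rfl⟩|⟨rfl,rfl,rfl⟩|⟨rfl,rfl,rfl⟩)|(⟨rfl,rfl,rfl⟩|⟨rfl,rfl,rfl⟩|⟨rfl,rfl,rfl⟩|⟨rfl,rfl,rfl⟩|⟨rfl,rfl,rfl⟩|⟨rfl,rfl,rfl⟩)|(⟨rfl,rfl,rfl⟩|⟨rfl,rfl,rfl⟩|⟨rfl,rfl,rfl⟩|⟨rfl,rfl,rfl⟩|⟨rfl,rfl,rfl⟩|⟨rfl,rfl,rfl⟩)|(⟨rfl,rfl,rfl⟩|⟨rfl,rfl,rfl⟩|⟨rfl,rfl,rfl⟩|⟨rfl,rfl,rfl⟩|⟨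rfl,rfl,rfl⟩|⟨rfl,rfl,rfl⟩)|(⟨rfl,rfl,rfl⟩|⟨rfl,rfl,rfl⟩|⟨rfl,rfl,rfl⟩|⟨rfl,rfl,rfl⟩|⟨rfl,rfl,rfl⟩|⟨rfl,rfl,rfl⟩)|(⟨rfl,rfl,rfl⟩|⟨rfl,rfl,rfl⟩|⟨rfl,rfl,rfl⟩|⟨rfl,rfl,rfl⟩|⟨rfl,rfl,rfl⟩|⟨rfl,rfl,rfl⟩)|(⟨rfl,rfl,rfl⟩|⟨rfl,rfl,rfl⟩|⟨rfl,rfl,rfl⟩|⟨rfl,rfl,rfl⟩|⟨rfl,rfl,rfl⟩|⟨rfl,rfl,rfl⟩)|(⟨rfl,rfl,rfl⟩|⟨rfl,rfl,rfl⟩|⟨rfl,rfl,rfl⟩|⟨rfl,rfl,rfl⟩|⟨rfl,rfl,rfl⟩|⟨rfl,rfl,rfl⟩)|(⟨rfl,rfl,rfl⟩|⟨rfl,rfl,rfl⟩|⟨rfl,rfl,rfl⟩|⟨rfl,rfl,rfl⟩|⟨rfl,rfl,rfl⟩|⟨rfl,rfl,rfl⟩)|(⟨rfl,rfl,rfl⟩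|⟨rfl,rfl,rfl⟩|⟨rfl,rfl,rfl⟩|⟨rfl,rfl,rfl⟩|⟨rfl,rfl,rfl⟩|⟨rfl,rfl,rfl⟩)|(⟨rfl,rfl,rfl⟩|⟨rfl,rfl,rfl⟩|⟨rfl,rfl,rfl⟩|⟨rfl,rfl,rfl⟩|⟨rfl,rfl,rfl⟩|⟨rfl,rfl,rfl⟩)|(⟨rfl,rfl,rfl⟩|⟨rfl,rfl,rfl⟩|⟨rfl,rfl,rfl⟩|⟨rfl,rfl,rfl⟩|⟨rfl,rfl,rfl⟩|⟨rfl,rfl,rfl⟩)|(⟨rfl,rfl,rfl⟩|⟨rfl,rfl,rfl⟩|⟨rfl,rfl,rfl⟩|⟨rfl,rfl,rfl⟩|⟨rfl,rfl,rfl⟩|⟨rfl,rfl,rfl⟩)|(⟨rfl,rfl,rfl⟩|⟨rfl,rfl,rfl⟩|⟨rfl,rfl,rfl⟩|⟨rfl,rfl,rfl⟩|⟨rfl,rfl,rfl⟩|⟨rfl,rfl,rfl⟩)|(⟨rfl,rfl,rfl⟩|⟨rfl,rfl,rfl⟩|⟨rfl,rfl,rfl⟩|⟨rfl,rfl,rfl⟩|⟨rfl,rfl,rfl⟩|⟨rfl,rfl,rfl⟩)|(⟨rfl,rfl,rfl⟩|⟨rfl,rfl,rfl⟩|⟨rfl,rfl,rfl⟩|⟨rfl,rfl,rfl⟩|⟨rfl,rfl,rfl⟩|⟨rfl,rfl,rfl⟩)|(⟨rfl,rfl,rfl⟩|⟨rfl,rfl,rfl⟩|⟨rfl,rfl,rfl⟩|⟨rfl,rfl,rfl⟩|⟨rfl,rfl,rfl⟩|⟨rfl,rfl,rfl⟩)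 <;> decide

def st16Adj : Fin 15 → Fin 15 → Bool :=
  ![![false, false, false, true, true, true, true, true, true, true, true, true, true, true, true],
    ![false, false, false, true, true, true, true, true, true, true, true, true, true, true, true],
    ![false, false, false, true, true, true, true, true, true, true, true, true, true, true, true],
    ![true, true, true, false, true, true, true, false, false, false, false, false, false, false, false],
    ![true, true, true, true, false, true, false, true, false, false, false, false, false, false, false],
    ![true, true, true, true, true, false, false, false, true, false, false, false, false, false, false],
    ![true, true, true, true, false, false, false, false, false, false, false, true, false, false, true],
    ![true, true, true, false, true, false, false, false, false, true, true, false, false, false, false],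
    ![true, true, true, false, false, true, false, false, false, false, false, false, true, true, false],
    ![true, true, true, false, false, false, false, true, false, false, true, true, false, false, false],
    ![true, true, true, false, false, false, false, true, false, true, false, true, false, false, false],
    ![true, true, true, false, false, false, true, false, false, true, true, false, false, false, false],
    ![true, true, true, false, false, false, false, false, true, false, false, false, false, true, true],
    ![true, true, true, false, false, false, false, false, true, false, false, false, true, false, true],
    ![true, true, true, false, false, false, true, false, false, false, false, false, true, true, false]]

def st16Wit : Fin 15 → Fin 15 → Fin 15 :=
  ![![(0:Fin 15), (0:Fin 15), (0:Fin 15), (6:Fin 15), (5:Fin 15), (4:Fin 15), (3:Fin 15), (9:Fin 15), (12:Fin 15), (7:Fin 15), (11:Fin 15), (10:Fin 15), (8:Fin 15), (14:Fin 15), (13:Fin 15)],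
    ![(0:Fin 15), (0:Fin 15), (0:Fin 15), (4:Fin 15), (3:Fin 15), (8:Fin 15), (14:Fin 15), (10:Fin 15), (5:Fin 15), (11:Fin 15), (7:Fin 15), (9:Fin 15), (13:Fin 15), (12:Fin 15), (6:Fin 15)],
    ![(0:Fin 15), (0:Fin 15), (0:Fin 15), (5:Fin 15), (7:Fin 15), (3:Fin 15), (11:Fin 15), (4:Fin 15), (13:Fin 15), (10:Fin 15), (9:Fin 15), (6:Fin 15), (14:Fin 15), (8:Fin 15), (12:Fin 15)],
    ![(6:Fin 15), (4:Fin 15), (5:Fin 15), (0:Fin 15), (1:Fin 15), (2:Fin 15), (0:Fin 15), (0:Fin 15), (0:Fin 15), (0:Fin 15), (0:Fin 15), (0:Fin 15), (0:Fin 15), (0:Fin 15), (0:Fin 15)],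
    ![(5:Fin 15), (3:Fin 15), (7:Fin 15), (1:Fin 15), (0:Fin 15), (0:Fin 15), (0:Fin 15), (2:Fin 15), (0:Fin 15), (0:Fin 15), (0:Fin 15), (0:Fin 15), (0:Fin 15), (0:Fin 15), (0:Fin 15)],
    ![(4:Fin 15), (8:Fin 15), (3:Fin 15), (2:Fin 15), (0:Fin 15), (0:Fin 15), (0:Fin 15), (0:Fin 15), (1:Fin 15), (0:Fin 15), (0:Fin 15), (0:Fin 15), (0:Fin 15), (0:Fin 15), (0:Fin 15)],
    ![(3:Fin 15), (14:Fin 15), (11:Fin 15), (0:Fin 15), (0:Fin 15), (0:Fin 15), (0:Fin 15), (0:Fin 15), (0:Fin 15), (0:Fin 15), (0:Fin 15), (2:Fin 15), (0:Fin 15), (0:Fin 15), (1:Fin 15)],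
    ![(9:Fin 15), (10:Fin 15), (4:Fin 15), (0:Fin 15), (2:Fin 15), (0:Fin 15), (0:Fin 15), (0:Fin 15), (0:Fin 15), (0:Fin 15), (1:Fin 15), (0:Fin 15), (0:Fin 15), (0:Fin 15), (0:Fin 15)],
    ![(12:Fin 15), (5:Fin 15), (13:Fin 15), (0:Fin 15), (0:Fin 15), (1:Fin 15), (0:Fin 15), (0:Fin 15), (0:Fin 15), (0:Fin 15), (0:Fin 15), (0:Fin 15), (0:Fin 15), (2:Fin 15), (0:Fin 15)],
    ![(7:Fin 15), (11:Fin 15), (10:Fin 15), (0:Fin 15), (0:Fin 15), (0:Fin 15), (0:Fin 15), (0:Fin 15), (0:Fin 15), (0:Fin 15), (2:Fin 15), (1:Fin 15), (0:Fin 15), (0:Fin 15), (0:Fin 15)],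
    ![(11:Fin 15), (7:Fin 15), (9:Fin 15), (0:Fin 15), (0:Fin 15), (0:Fin 15), (0:Fin 15), (1:Fin 15), (0:Fin 15), (2:Fin 15), (0:Fin 15), (0:Fin 15), (0:Fin 15), (0:Fin 15), (0:Fin 15)],
    ![(10:Fin 15), (9:Fin 15), (6:Fin 15), (0:Fin 15), (0:Fin 15), (0:Fin 15), (2:Fin 15), (0:Fin 15), (0:Fin 15), (1:Fin 15), (0:Fin 15), (0:Fin 15), (0:Fin 15), (0:Fin 15), (0:Fin 15)],
    ![(8:Fin 15), (13:Fin 15), (14:Fin 15), (0:Fin 15), (0:Fin 15), (0:Fin 15), (0:Fin 15), (0:Fin 15), (0:Fin 15), (0:Fin 15), (0:Fin 15), (0:Fin 15), (0:Fin 15), (1:Fin 15), (2:Fin 15)],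
    ![(14:Fin 15), (12:Fin 15), (8:Fin 15), (0:Fin 15), (0:Fin 15), (0:Fin 15), (0:Fin 15), (0:Fin 15), (2:Fin 15), (0:Fin 15), (0:Fin 15), (0:Fin 15), (1:Fin 15), (0:Fin 15), (0:Fin 15)],
    ![(13:Fin 15), (6:Fin 15), (12:Fin 15), (0:Fin 15), (0:Fin 15), (0:Fin 15), (1:Fin 15), (0:Fin 15), (0:Fin 15), (0:Fin 15), (0:Fin 15), (0:Fin 15), (2:Fin 15), (0:Fin 15), (0:Fin 15)]]

def st16WitK : Fin 15 → Fin 15 → Fin 15 :=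
  ![![(0:Fin 15), (2:Fin 15), (1:Fin 15), (1:Fin 15), (1:Fin 15), (1:Fin 15), (1:Fin 15), (1:Fin 15), (1:Fin 15), (1:Fin 15), (1:Fin 15), (1:Fin 15), (1:Fin 15), (1:Fin 15), (1:Fin 15)],
    ![(2:Fin 15), (0:Fin 15), (0:Fin 15), (0:Fin 15), (0:Fin 15), (0:Fin 15), (0:Fin 15), (0:Fin 15), (0:Fin 15), (0:Fin 15), (0:Fin 15), (0:Fin 15), (0:Fin 15), (0:Fin 15), (0:Fin 15)],
    ![(1:Fin 15), (0:Fin 15), (0:Fin 15), (0:Fin 15), (0:Fin 15), (0:Fin 15), (0:Fin 15), (0:Fin 15), (0:Fin 15), (0:Fin 15), (0:Fin 15), (0:Fin 15), (0:Fin 15), (0:Fin 15), (0:Fin 15)],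
    ![(1:Fin 15), (0:Fin 15), (0:Fin 15), (0:Fin 15), (0:Fin 15), (0:Fin 15), (1:Fin 15), (0:Fin 15), (0:Fin 15), (0:Fin 15), (0:Fin 15), (0:Fin 15), (0:Fin 15), (0:Fin 15), (0:Fin 15)],
    ![(1:Fin 15), (0:Fin 15), (0:Fin 15), (0:Fin 15), (0:Fin 15), (1:Fin 15), (0:Fin 15), (0:Fin 15), (0:Fin 15), (0:Fin 15), (0:Fin 15), (0:Fin 15), (0:Fin 15), (0:Fin 15), (0:Fin 15)],
    ![(1:Fin 15), (0:Fin 15), (0:Fin 15), (0:Fin 15), (1:Fin 15), (0:Fin 15), (0:Fin 15), (0:Fin 15), (0:Fin 15), (0:Fin 15), (0:Fin 15), (0:Fin 15), (0:Fin 15), (0:Fin 15), (0:Fin 15)],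
    ![(1:Fin 15), (0:Fin 15), (0:Fin 15), (1:Fin 15), (0:Fin 15), (0:Fin 15), (0:Fin 15), (0:Fin 15), (0:Fin 15), (0:Fin 15), (0:Fin 15), (0:Fin 15), (0:Fin 15), (0:Fin 15), (0:Fin 15)],
    ![(1:Fin 15), (0:Fin 15), (0:Fin 15), (0:Fin 15), (0:Fin 15), (0:Fin 15), (0:Fin 15), (0:Fin 15), (0:Fin 15), (1:Fin 15), (0:Fin 15), (0:Fin 15), (0:Fin 15), (0:Fin 15), (0:Fin 15)],
    ![(1:Fin 15), (0:Fin 15), (0:Fin 15), (0:Fin 15), (0:Fin 15), (0:Fin 15), (0:Fin 15), (0:Fin 15), (0:Fin 15), (0:Fin 15), (0:Fin 15), (0:Fin 15), (1:Fin 15), (0:Fin 15), (0:Fin 15)],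
    ![(1:Fin 15), (0:Fin 15), (0:Fin 15), (0:Fin 15), (0:Fin 15), (0:Fin 15), (0:Fin 15), (1:Fin 15), (0:Fin 15), (0:Fin 15), (0:Fin 15), (0:Fin 15), (0:Fin 15), (0:Fin 15), (0:Fin 15)],
    ![(1:Fin 15), (0:Fin 15), (0:Fin 15), (0:Fin 15), (0:Fin 15), (0:Fin 15), (0:Fin 15), (0:Fin 15), (0:Fin 15), (0:Fin 15), (0:Fin 15), (1:Fin 15), (0:Fin 15), (0:Fin 15), (0:Fin 15)],
    ![(1:Fin 15), (0:Fin 15), (0:Fin 15), (0:Fin 15), (0:Fin 15), (0:Fin 15), (0:Fin 15), (0:Fin 15), (0:Fin 15), (0:Fin 15), (1:Fin 15), (0:Fin 15), (0:Fin 15), (0:Fin 15), (0:Fin 15)],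
    ![(1:Fin 15), (0:Fin 15), (0:Fin 15), (0:Fin 15), (0:Fin 15), (0:Fin 15), (0:Fin 15), (0:Fin 15), (1:Fin 15), (0:Fin 15), (0:Fin 15), (0:Fin 15), (0:Fin 15), (0:Fin 15), (0:Fin 15)],
    ![(1:Fin 15), (0:Fin 15), (0:Fin 15), (0:Fin 15), (0:Fin 15), (0:Fin 15), (0:Fin 15), (0:Fin 15), (0:Fin 15), (0:Fin 15), (0:Fin 15), (0:Fin 15), (0:Fin 15), (0:Fin 15), (1:Fin 15)],
    ![(1:Fin 15), (0:Fin 15), (0:Fin 15), (0:Fin 15), (0:Fin 15), (0:Fin 15), (0:Fin 15), (0:Fin 15), (0:Fin 15), (0:Fin 15), (0:Fin 15), (0:Fin 15), (0:Fin 15), (1:Fin 15), (0:Fin 15)]]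


theorem st16Good_adj : ∀ x y z : Fin 15, st16Good x y z → st16Adj x y = true := by
  intro x y z h
  rcases h with (⟨rfl,rfl,rfl⟩|⟨rfl,rfl,rfl⟩|⟨rfl,rfl,rfl⟩|⟨rfl,rfl,rfl⟩|⟨rfl,rfl,rfl⟩|⟨rfl,rfl,rfl⟩)|(⟨rfl,rfl,rfl⟩|⟨rfl,rfl,rfl⟩|⟨rfl,rfl,rfl⟩|⟨rfl,rfl,rfl⟩|⟨rfl,rfl,rfl⟩|⟨rfl,rfl,rfl⟩)|(⟨rfl,rfl,rfl⟩|⟨rfl,rfl,rfl⟩|⟨rfl,rfl,rfl⟩|⟨rfl,rfl,rfl⟩|⟨rfl,rfl,rfl⟩|⟨rfl,rfl,rfl⟩)|(⟨rfl,rfl,rfl⟩|⟨rfl,rfl,rfl⟩|⟨rfl,rfl,rfl⟩|⟨rfl,rfl,rfl⟩|⟨rfl,rfl,rfl⟩|⟨rfl,rfl,rfl⟩)|(⟨rfl,rfl,rfl⟩|⟨rfl,rfl,rfl⟩|⟨rfl,rfl,rfl⟩|⟨rfl,rfl,rfl⟩|⟨rfl,rfl,rfl⟩|⟨rfl,rf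l,rfl⟩)|(⟨rfl,rfl,rfl⟩|⟨rfl,rfl,rfl⟩|⟨rfl,rfl,rfl⟩|⟨rfl,rfl,rfl⟩|⟨rfl,rfl,rfl⟩|⟨rfl,rfl,rfl⟩)|(⟨rfl,rfl,rfl⟩|⟨rfl,rfl,rfl⟩|⟨rfl,rfl,rfl⟩|⟨rfl,rfl,rfl⟩|⟨rfl,rfl,rfl⟩|⟨rfl,rfl,rfl⟩)|(⟨rfl,rfl,rfl⟩|⟨rfl,rfl,rfl⟩|⟨rfl,rfl,rfl⟩|⟨rfl,rfl,rfl⟩|⟨rfl,rfl,rfl⟩|⟨rfl,rfl,rfl⟩)|(⟨rfl,rfl,rfl⟩|⟨rfl,rfl,rfl⟩|⟨rfl,rfl,rfl⟩|⟨rfl,rfl,rfl⟩|⟨rfl,rfl,rfl⟩|⟨rfl,rfl,rfl⟩)|(⟨rfl,rfl,rfl⟩|⟨rfl,rfl,rfl⟩|⟨rfl,rfl,rfl⟩|⟨rfl,rfl,rfl⟩|⟨rfl,rfl,rfl⟩|⟨rfl,rfl,rfl⟩)|(⟨rfl,rfl,rfl⟩|⟨rfl,rfl,rfl⟩|⟨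rfl,rfl,rfl⟩|⟨rfl,rfl,rfl⟩|⟨rfl,rfl,rfl⟩|⟨rfl,rfl,rfl⟩)|(⟨rfl,rfl,rfl⟩|⟨rfl,rfl,rfl⟩|⟨rfl,rfl,rfl⟩|⟨rfl,rfl,rfl⟩|⟨rfl,rfl,rfl⟩|⟨rfl,rfl,rfl⟩)|(⟨rfl,rfl,rfl⟩|⟨rfl,rfl,rfl⟩|⟨rfl,rfl,rfl⟩|⟨rfl,rfl,rfl⟩|⟨rfl,rfl,rfl⟩|⟨rfl,rfl,rfl⟩)|(⟨rfl,rfl,rfl⟩|⟨rfl,rfl,rfl⟩|⟨rfl,rfl,rfl⟩|⟨rfl,rfl,rfl⟩|⟨rfl,rfl,rfl⟩|⟨rfl,rfl,rfl⟩)|(⟨rfl,rfl,rfl⟩|⟨rfl,rfl,rfl⟩|⟨rfl,rfl,rfl⟩|⟨rfl,rfl,rfl⟩|⟨rfl,rfl,rfl⟩|⟨rfl,rfl,rfl⟩)|(⟨rfl,rfl,rfl⟩|⟨rfl,rfl,rfl⟩|⟨rfl,rfl,rfl⟩|⟨rfl,rfl,rfl⟩|⟨rfl,rfl,rfl⟩|⟨rfl,rfl,rfl⟩)|(⟨rfl,rfl,rfl⟩|⟨rfl,rfl,rfl⟩|⟨rfl,rfl,rfl⟩|⟨rfl,rfl,rfl⟩|⟨rfl,rfl,rfl⟩|⟨rfl,rfl,rfl⟩)|(⟨rfl,rfl,rfl⟩|⟨rfl,rfl,rfl⟩|⟨rfl,rfl,rfl⟩|⟨rfl,rfl,rfl⟩|⟨rfl,rfl,rfl⟩|⟨rfl,rfl,rfl⟩)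 <;> decide

set_option maxRecDepth 100000 in
theorem st16Adj_good : ∀ x y : Fin 15, st16Adj x y = true → st16Good x y (st16Wit x y) := by
  decide

def st16NbF (x : Fin 15) : Finset (Fin 15) := Finset.univ.filter (fun y => st16Adj x y)

set_option maxRecDepth 100000 in
theorem st16Nb_card :
    ((st16NbF 0).card = 12 ∧ (st16NbF 1).card = 12 ∧ (st16NbF 2).card = 12) ∧
    (∀ y : Fin 15, 12 ≤ (st16NbF y).card → y = 0 ∨ y = 1 ∨ y = 2) := by decide

set_option maxRecDepth 100000 in
set_option maxHeartbeats 1000000 in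
theorem st16_witk : ∀ (t u : Bool) (i j : Fin 15), i ≠ j →
    st16Dz t u i j (st16WitK i j) ≠ 0 := by decide

set_option maxRecDepth 100000 in
set_option maxHeartbeats 2000000 in
theorem st16MasterSorted : ∀ (t u : Bool) (i j k : Fin 15),
    i < j → j < k → (st16Dz t u i j k = 0 ↔ st16Good i j k) := by decide

theorem st16Det_swap₁ {R : Type} [CommRing R] (x y z : Fin 3 → R) :
    st16Det y x z = -st16Det x y z := by unfold st16Det; ring

theorem st16Det_swap₂ {R : Type} [CommRing R] (x y z : Fin 3 → R) :
    st16Det x z y = -st16Det x y z := by unfold st16Det; ring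

theorem st16Master (t u : Bool) (i j k : Fin 15) (hij : i ≠ j) (hik : i ≠ k) (hjk : j ≠ k) :
    st16Dz t u i j k = 0 ↔ st16Good i j k := by
  have key : ∀ a b c : Fin 15, a < b → b < c →
      (st16Dz t u a b c = 0 ↔ st16Good a b c) := st16MasterSorted t u
  have s1 : ∀ a b c : Fin 15, (st16Dz t u a b c = 0 ↔ st16Dz t u b a c = 0) := by
    intro a b c
    show (st16Det _ _ _ = 0 ↔ st16Det _ _ _ = 0)
    rw [show st16Det (st16Vz t u b) (st16Vz t u a) (st16Vz t u c)
        = -st16Det (st16Vz t u a) (st16Vz t u b) (st16Vz t u c) from st16Det_swap₁ _ _ _,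
      neg_eq_zero]
  have s2 : ∀ a b c : Fin 15, (st16Dz t u a b c = 0 ↔ st16Dz t u a c b = 0) := by
    intro a b c
    show (st16Det _ _ _ = 0 ↔ st16Det _ _ _ = 0)
    rw [show st16Det (st16Vz t u a) (st16Vz t u c) (st16Vz t u b)
        = -st16Det (st16Vz t u a) (st16Vz t u b) (st16Vz t u c) from st16Det_swap₂ _ _ _,
      neg_eq_zero]
  have g1 : ∀ a b c : Fin 15, (st16Good a b c ↔ st16Good b a c) :=
    fun a b c => st16Good_swap₁ b a c
  have g2 : ∀ a b c : Fin 15, (st16Good a b c ↔ st16Good a c b) :=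
    fun a b c => st16Good_swap₂ a c b
  rcases lt_trichotomy i j with h1 | h1 | h1
  · rcases lt_trichotomy j k with h2 | h2 | h2
    · exact key i j k h1 h2
    · exact absurd h2 hjk
    · rcases lt_trichotomy i k with h3 | h3 | h3
      · exact (s2 i j k).trans ((key i k j h3 h2).trans (g2 i k j))
      · exact absurd h3 hik
      · exact (s2 i j k).trans ((s1 i k j).trans ((key k i j h3 h1).trans
          ((g1 k i j).trans (g2 i k j))))
  · exact absurd h1 hij
  · rcases lt_trichotomy i k with h3 | h3 | h3
    · exact (s1 i j k).trans ((key j i k h1 h3).trans (g1 j i k))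
    · exact absurd h3 hik
    · rcases lt_trichotomy j k with h2 | h2 | h2
      · exact (s1 i j k).trans ((s2 j i k).trans ((key j k i h2 h3).trans
          ((g2 j k i).trans (g1 j i k))))
      · exact absurd h2 hjk
      · exact (s2 i j k).trans ((s1 i k j).trans ((s2 k i j).trans
          ((key k j i h2 h1).trans ((g2 k j i).trans ((g1 k i j).trans (g2 i k j))))))


/-! ### Analytic bridge -/

noncomputable def st16Phi : Z2 →+* ℝ := Zsqrtd.toReal (by norm_num)

theorem st16Phi_apply (z : Z2) : st16Phi z = (z.re : ℝ) + (z.im : ℝ) * Real.sqrt 2 := by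
  simp [st16Phi, Zsqrtd.toReal_apply]

theorem st16Phi_inj : Function.Injective st16Phi := by
  apply Zsqrtd.toReal_injective
  intro n h
  have h1 : n.natAbs * n.natAbs = 2 := by
    have := congrArg Int.natAbs h
    simpa [Int.natAbs_mul] using this.symm
  rcases Nat.lt_or_ge n.natAbs 2 with h2 | h2
  · interval_cases h3 : n.natAbs <;> omega
  · nlinarith

theorem st16Det_phi (x y z : Fin 3 → Z2) :
    st16Det (fun j => st16Phi (x j)) (fun j => st16Phi (y j)) (fun j => st16Phi (z j)) =
      st16Phi (st16Det x y z) := by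
  simp only [st16Det, map_add, map_sub, map_mul]

theorem st16_mk_congr {x y : Fin 3 → ℝ} (h : x = y) (hx : x ≠ 0) (hy : y ≠ 0) :
    Projectivization.mk ℝ x hx = Projectivization.mk ℝ y hy := by subst h; rfl

theorem st16_rep_eq_zero_iff (f : (Fin 3 → ℝ) →ₗ[ℝ] ℝ) (v : Fin 3 → ℝ) (hv : v ≠ 0) :
    f (Projectivization.mk ℝ v hv).rep = 0 ↔ f v = 0 := by
  obtain ⟨a, ha⟩ := Projectivization.exists_smul_eq_mk_rep ℝ v hv
  rw [← ha, Units.smul_def, map_smul, smul_eq_mul]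
  constructor
  · intro h
    rcases mul_eq_zero.1 h with h | h
    · exact absurd h (Units.ne_zero a)
    · exact h
  · intro h; rw [h, mul_zero]

theorem st16_collinear_iff (u v w : Fin 3 → ℝ) (hu : u ≠ 0) (hv : v ≠ 0) (hw : w ≠ 0) :
    ProjCollinear {Projectivization.mk ℝ u hu, Projectivization.mk ℝ v hv,
      Projectivization.mk ℝ w hw} ↔ st16Det u v w = 0 := by
  have hdet : (Matrix.of ![u, v, w]).det = st16Det u v w := by
    simp [Matrix.det_fin_three, st16Det]; ring
  constructor
  · rintro ⟨f, hf, hvan⟩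
    set c : Fin 3 → ℝ := fun j => f (Pi.single j 1) with hc
    have hfx : ∀ x : Fin 3 → ℝ, f x = ∑ j, x j * c j := by
      intro x
      conv_lhs => rw [pi_eq_sum_univ x]
      rw [map_sum]
      refine Finset.sum_congr rfl fun j _ => ?_
      rw [map_smul, smul_eq_mul, hc]
      congr 1
      congr 1
      funext i
      simp [Pi.single_apply, eq_comm]
    have hc0 : c ≠ 0 := by
      intro h0
      apply hf
      apply LinearMap.ext
      intro x
      rw [hfx x, h0]
      simp
    have hu0 : f u = 0 := (st16_rep_eq_zero_iff f u hu).1 (hvan _ (by simp))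
    have hv0 : f v = 0 := (st16_rep_eq_zero_iff f v hv).1 (hvan _ (by simp))
    have hw0 : f w = 0 := (st16_rep_eq_zero_iff f w hw).1 (hvan _ (by simp))
    rw [← hdet, ← Matrix.exists_mulVec_eq_zero_iff]
    refine ⟨c, hc0, ?_⟩
    funext i
    fin_cases i <;>
      simp only [Matrix.mulVec, dotProduct, Matrix.of_apply, Pi.zero_apply] <;>
      rw [← hfx] <;>
      first
        | exact hu0
        | exact hv0
        | exact hw0
  · intro h
    rw [← hdet, ← Matrix.exists_mulVec_eq_zero_iff] at h
    obtain ⟨c, hc0, hc⟩ := h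
    refine ⟨∑ j, c j • (LinearMap.proj j : (Fin 3 → ℝ) →ₗ[ℝ] ℝ), ?_, ?_⟩
    · obtain ⟨j, hj⟩ := Function.ne_iff.1 hc0
      intro h0
      apply hj
      have := congrFun (congrArg (fun g => g.toFun) h0) (Pi.single j 1)
      simpa [LinearMap.proj, Pi.single_apply, Finset.sum_ite_eq] using this
    · intro p hp
      have key : ∀ (x : Fin 3 → ℝ) (hx : x ≠ 0) (i : Fin 3),
          (Matrix.of ![u,v,w]) i = x →
          (∑ j, c j • (LinearMap.proj j : (Fin 3 → ℝ) →ₗ[ℝ] ℝ))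
            (Projectivization.mk ℝ x hx).rep = 0 := by
        intro x hx i hix
        rw [st16_rep_eq_zero_iff]
        have hval : (∑ j, c j • (LinearMap.proj j : (Fin 3 → ℝ) →ₗ[ℝ] ℝ)) x
            = ∑ j, x j * c j := by
          simp [LinearMap.proj, mul_comm]
        rw [hval]
        have := congrFun hc i
        simp only [Matrix.mulVec, dotProduct, Pi.zero_apply] at this
        rw [← this, hix]
      rcases hp with rfl | rfl | rfl
      · exact key u hu 0 rfl
      · exact key v hv 1 rfl
      · exact key w hw 2 rfl

theorem st16_p132 (x y z : ProjPlaneR) : ({x, z, y} : Set ProjPlaneR) = {x, y, z} := by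
  ext a; simp only [Set.mem_insert_iff, Set.mem_singleton_iff]; tauto
theorem st16_p213 (x y z : ProjPlaneR) : ({y, x, z} : Set ProjPlaneR) = {x, y, z} := by
  ext a; simp only [Set.mem_insert_iff, Set.mem_singleton_iff]; tauto
theorem st16_p231 (x y z : ProjPlaneR) : ({y, z, x} : Set ProjPlaneR) = {x, y, z} := by
  ext a; simp only [Set.mem_insert_iff, Set.mem_singleton_iff]; tauto
theorem st16_p312 (x y z : ProjPlaneR) : ({z, x, y} : Set ProjPlaneR) = {x, y, z} := by
  ext a; simp only [Set.mem_insert_iff, Set.mem_singleton_iff]; tauto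
theorem st16_p321 (x y z : ProjPlaneR) : ({z, y, x} : Set ProjPlaneR) = {x, y, z} := by
  ext a; simp only [Set.mem_insert_iff, Set.mem_singleton_iff]; tauto

set_option maxHeartbeats 1000000 in
theorem st16_sets_to_tri {g : Fin 15 → ProjPlaneR} (hg : Function.Injective g)
    (x y z : Fin 15) {i j k : Fin 15} (hij : i ≠ j) (hik : i ≠ k) (hjk : j ≠ k)
    (h : ({g i, g j, g k} : Set ProjPlaneR) = {g x, g y, g z}) :
    st16Tri x y z i j k := by
  have mem : ∀ a : Fin 15, g a ∈ ({g x, g y, g z} : Set ProjPlaneR) →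
      a = x ∨ a = y ∨ a = z := by
    intro a ha
    simp only [Set.mem_insert_iff, Set.mem_singleton_iff] at ha
    rcases ha with h' | h' | h'
    · exact Or.inl (hg h')
    · exact Or.inr (Or.inl (hg h'))
    · exact Or.inr (Or.inr (hg h'))
  have hi := mem i (h ▸ (by simp : g i ∈ ({g i, g j, g k} : Set ProjPlaneR)))
  have hj := mem j (h ▸ (by simp : g j ∈ ({g i, g j, g k} : Set ProjPlaneR)))
  have hk := mem k (h ▸ (by simp : g k ∈ ({g i, g j, g k} : Set ProjPlaneR)))
  unfold st16Tri
  rcases hi with rfl | rfl | rfl <;> rcases hj with rfl | rfl | rfl <;>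
    rcases hk with rfl | rfl | rfl <;>
    first
      | exact absurd rfl hij
      | exact absurd rfl hik
      | exact absurd rfl hjk
      | simp

/-! ### The main lemma -/

theorem st16_main (t u : Bool) (α β : ℝ)
    (hα : α = ((st16Sg t : ℤ) : ℝ)) (hβ : β = ((st16Sg u : ℤ) : ℝ)) :
    (∀ p q r : ProjPlaneR, p ∈ Dconf α β → q ∈ Dconf α β → r ∈ Dconf α β →
      p ≠ q → p ≠ r → q ≠ r →
      (ProjCollinear {p, q, r} ↔
        ((({p, q, r} : Set ProjPlaneR) = {V₁, S₁, S₄}) ∨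
         (({p, q, r} : Set ProjPlaneR) = {V₁, S₂, S₃}) ∨
         (({p, q, r} : Set ProjPlaneR) = {V₁, S₅, S₇ α}) ∨
         (({p, q, r} : Set ProjPlaneR) = {V₁, S₆, S₁₀ β}) ∨
         (({p, q, r} : Set ProjPlaneR) = {V₁, S₈ α, S₉ α}) ∨
         (({p, q, r} : Set ProjPlaneR) = {V₁, S₁₁ β, S₁₂ β}) ∨
         (({p, q, r} : Set ProjPlaneR) = {V₂, S₁, S₂}) ∨
         (({p, q, r} : Set ProjPlaneR) = {V₂, S₃, S₆}) ∨
         (({p, q, r} : Set ProjPlaneR) = {V₂, S₄, S₁₂ β}) ∨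
         (({p, q, r} : Set ProjPlaneR) = {V₂, S₅, S₈ α}) ∨
         (({p, q, r} : Set ProjPlaneR) = {V₂, S₇ α, S₉ α}) ∨
         (({p, q, r} : Set ProjPlaneR) = {V₂, S₁₀ β, S₁₁ β}) ∨
         (({p, q, r} : Set ProjPlaneR) = {V₃, S₁, S₃}) ∨
         (({p, q, r} : Set ProjPlaneR) = {V₃, S₂, S₅}) ∨
         (({p, q, r} : Set ProjPlaneR) = {V₃, S₄, S₉ α}) ∨
         (({p, q, r} : Set ProjPlaneR) = {V₃, S₆, S₁₁ β}) ∨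
         (({p, q, r} : Set ProjPlaneR) = {V₃, S₇ α, S₈ α}) ∨
         (({p, q, r} : Set ProjPlaneR) = {V₃, S₁₀ β, S₁₂ β})))) ∧
    (∀ f : ProjPlaneR → ProjPlaneR,
      Set.BijOn f (Dconf α β) (Dconf α β) →
      (∀ p ∈ Dconf α β, ∀ q ∈ Dconf α β, ∀ r ∈ Dconf α β,
        (ProjCollinear {p, q, r} ↔ ProjCollinear {f p, f q, f r})) →
      f '' ({V₁, V₂, V₃} : Set ProjPlaneR) = {V₁, V₂, V₃}) := by
  have hnz : ∀ i : Fin 15, (fun j => st16Phi (st16Vz t u i j)) ≠ 0 := by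
    intro i
    fin_cases i <;>
      (intro h;
       first
       | (have h0 := congrFun h 0;
          simp only [st16Vz, st16Phi_apply, Matrix.cons_val_zero, Matrix.cons_val_one,
            Matrix.cons_val_two, Matrix.head_cons, Matrix.tail_cons] at h0;
          norm_num at h0;
          done)
       | (have h1 := congrFun h 1;
          simp only [st16Vz, st16Phi_apply, Matrix.cons_val_zero, Matrix.cons_val_one,
            Matrix.cons_val_two, Matrix.head_cons, Matrix.tail_cons] at h1;
          norm_num at h1;
          done)
       | (have h2 := congrFun h 2;
          simp only [st16Vz, st16Phi_apply, Matrix.cons_val_zero, Matrix.cons_val_one,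
            Matrix.cons_val_two, Matrix.head_cons, Matrix.tail_cons] at h2;
          norm_num at h2;
          done))
  have hrep : ∀ i : Fin 15, st16PtR α β i =
      Projectivization.mk ℝ (fun j => st16Phi (st16Vz t u i j)) (hnz i) := by
    subst hα; subst hβ
    intro i
    fin_cases i <;>
      (apply st16_mk_congr;
       funext j;
       fin_cases j <;>
         (simp [st16Vz, st16Phi_apply];
          try push_cast;
          try ring))
  have keyIff : ∀ i j k : Fin 15,
      (ProjCollinear {st16PtR α β i, st16PtR α β j, st16PtR α β k} ↔
        st16Dz t u i j k = 0) := by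
    intro i j k
    rw [hrep i, hrep j, hrep k, st16_collinear_iff, st16Det_phi]
    exact map_eq_zero_iff st16Phi st16Phi_inj
  have hPtinj : Function.Injective (st16PtR α β) := by
    intro i j hij
    by_contra hne
    apply st16_witk t u i j hne
    have h' := hij
    rw [hrep i, hrep j, Projectivization.mk_eq_mk_iff'] at h'
    obtain ⟨c, hcc⟩ := h'
    have hd : st16Det (fun j' => st16Phi (st16Vz t u i j'))
        (fun j' => st16Phi (st16Vz t u j j'))
        (fun j' => st16Phi (st16Vz t u (st16WitK i j) j')) = 0 := by
      rw [← hcc]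
      simp only [st16Det, Pi.smul_apply, smul_eq_mul]
      ring
    rw [st16Det_phi] at hd
    exact (map_eq_zero_iff st16Phi st16Phi_inj).1 hd
  have memD : ∀ x : ProjPlaneR, x ∈ Dconf α β ↔ ∃ i : Fin 15, x = st16PtR α β i := by
    intro x
    constructor
    · intro hx
      simp only [Dconf, Set.mem_insert_iff, Set.mem_singleton_iff] at hx
      rcases hx with rfl|rfl|rfl|rfl|rfl|rfl|rfl|rfl|rfl|rfl|rfl|rfl|rfl|rfl|rfl
      exacts [⟨0, rfl⟩, ⟨1, rfl⟩, ⟨2, rfl⟩, ⟨3, rfl⟩, ⟨4, rfl⟩, ⟨5, rfl⟩, ⟨6, rfl⟩,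
        ⟨7, rfl⟩, ⟨8, rfl⟩, ⟨9, rfl⟩, ⟨10, rfl⟩, ⟨11, rfl⟩, ⟨12, rfl⟩, ⟨13, rfl⟩, ⟨14, rfl⟩]
    · rintro ⟨i, rfl⟩
      fin_cases i <;> simp [Dconf, st16PtR]
  have FullIff : ∀ i j k : Fin 15, i ≠ j → i ≠ k → j ≠ k →
      (ProjCollinear {st16PtR α β i, st16PtR α β j, st16PtR α β k} ↔
        ((({st16PtR α β i, st16PtR α β j, st16PtR α β k} : Set ProjPlaneR) = {V₁, S₁, S₄}) ∨
         (({st16PtR α β i, st16PtR α β j, st16PtR α β k} : Set ProjPlaneR) = {V₁, S₂, S₃}) ∨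
         (({st16PtR α β i, st16PtR α β j, st16PtR α β k} : Set ProjPlaneR) = {V₁, S₅, S₇ α}) ∨
         (({st16PtR α β i, st16PtR α β j, st16PtR α β k} : Set ProjPlaneR) = {V₁, S₆, S₁₀ β}) ∨
         (({st16PtR α β i, st16PtR α β j, st16PtR α β k} : Set ProjPlaneR) = {V₁, S₈ α, S₉ α}) ∨
         (({st16PtR α β i, st16PtR α β j, st16PtR α β k} : Set ProjPlaneR) = {V₁, S₁₁ β, S₁₂ β}) ∨
         (({st16PtR α β i, st16PtR α β j, st16PtR α β k} : Set ProjPlaneR) = {V₂, S₁, S₂}) ∨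
         (({st16PtR α β i, st16PtR α β j, st16PtR α β k} : Set ProjPlaneR) = {V₂, S₃, S₆}) ∨
         (({st16PtR α β i, st16PtR α β j, st16PtR α β k} : Set ProjPlaneR) = {V₂, S₄, S₁₂ β}) ∨
         (({st16PtR α β i, st16PtR α β j, st16PtR α β k} : Set ProjPlaneR) = {V₂, S₅, S₈ α}) ∨
         (({st16PtR α β i, st16PtR α β j, st16PtR α β k} : Set ProjPlaneR) = {V₂, S₇ α, S₉ α}) ∨
         (({st16PtR α β i, st16PtR α β j, st16PtR α β k} : Set ProjPlaneR) = {V₂, S₁₀ β, S₁₁ β}) ∨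
         (({st16PtR α β i, st16PtR α β j, st16PtR α β k} : Set ProjPlaneR) = {V₃, S₁, S₃}) ∨
         (({st16PtR α β i, st16PtR α β j, st16PtR α β k} : Set ProjPlaneR) = {V₃, S₂, S₅}) ∨
         (({st16PtR α β i, st16PtR α β j, st16PtR α β k} : Set ProjPlaneR) = {V₃, S₄, S₉ α}) ∨
         (({st16PtR α β i, st16PtR α β j, st16PtR α β k} : Set ProjPlaneR) = {V₃, S₆, S₁₁ β}) ∨
         (({st16PtR α β i, st16PtR α β j, st16PtR α β k} : Set ProjPlaneR) = {V₃, S₇ α, S₈ α}) ∨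
         (({st16PtR α β i, st16PtR α β j, st16PtR α β k} : Set ProjPlaneR) = {V₃, S₁₀ β, S₁₂ β}))) := by
    intro i j k hij hik hjk
    rw [keyIff i j k, st16Master t u i j k hij hik hjk]
    constructor
    · intro hg
      rcases hg with (⟨rfl,rfl,rfl⟩|⟨rfl,rfl,rfl⟩|⟨rfl,rfl,rfl⟩|⟨rfl,rfl,rfl⟩|⟨rfl,rfl,rfl⟩|⟨rfl,rfl,rfl⟩)|(⟨rfl,rfl,rfl⟩|⟨rfl,rfl,rfl⟩|⟨rfl,rfl,rfl⟩|⟨rfl,rfl,rfl⟩|⟨rfl,rfl,rfl⟩|⟨rfl,rfl,rfl⟩)|(⟨rfl,rfl,rfl⟩|⟨rfl,rfl,rfl⟩|⟨rfl,rfl,rfl⟩|⟨rfl,rfl,rfl⟩|⟨rfl,rfl,rfl⟩|⟨rfl,rfl,rfl⟩)|(⟨rfl,rfl,rfl⟩|⟨rfl,rfl,rfl⟩|⟨rfl,rfl,rfl⟩|⟨rfl,rfl,rfl⟩|⟨rfl,rfl,rfl⟩|⟨rfl,rfl,rfl⟩)|(⟨rfl,rfl,rfl⟩|⟨rfl,r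fl,rfl⟩|⟨rfl,rfl,rfl⟩|⟨rfl,rfl,rfl⟩|⟨rfl,rfl,rfl⟩|⟨rfl,rfl,rfl⟩)|(⟨rfl,rfl,rfl⟩|⟨rfl,rfl,rfl⟩|⟨rfl,rfl,rfl⟩|⟨rfl,rfl,rfl⟩|⟨rfl,rfl,rfl⟩|⟨rfl,rfl,rfl⟩)|(⟨rfl,rfl,rfl⟩|⟨rfl,rfl,rfl⟩|⟨rfl,rfl,rfl⟩|⟨rfl,rfl,rfl⟩|⟨rfl,rfl,rfl⟩|⟨rfl,rfl,rfl⟩)|(⟨rfl,rfl,rfl⟩|⟨rfl,rfl,rfl⟩|⟨rfl,rfl,rfl⟩|⟨rfl,rfl,rfl⟩|⟨rfl,rfl,rfl⟩|⟨rfl,rfl,rfl⟩)|(⟨rfl,rfl,rfl⟩|⟨rfl,rfl,rfl⟩|⟨rfl,rfl,rfl⟩|⟨rfl,rfl,rfl⟩|⟨rfl,rfl,rfl⟩|⟨rfl,rfl,rfl⟩)|(⟨rfl,rfl,rfl⟩|⟨rfl,rfl,rfl⟩|⟨rfl,rfl,rfl⟩|⟨rfl,rfl,rfl⟩|⟨r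fl,rfl,rfl⟩|⟨rfl,rfl,rfl⟩)|(⟨rfl,rfl,rfl⟩|⟨rfl,rfl,rfl⟩|⟨rfl,rfl,rfl⟩|⟨rfl,rfl,rfl⟩|⟨rfl,rfl,rfl⟩|⟨rfl,rfl,rfl⟩)|(⟨rfl,rfl,rfl⟩|⟨rfl,rfl,rfl⟩|⟨rfl,rfl,rfl⟩|⟨rfl,rfl,rfl⟩|⟨rfl,rfl,rfl⟩|⟨rfl,rfl,rfl⟩)|(⟨rfl,rfl,rfl⟩|⟨rfl,rfl,rfl⟩|⟨rfl,rfl,rfl⟩|⟨rfl,rfl,rfl⟩|⟨rfl,rfl,rfl⟩|⟨rfl,rfl,rfl⟩)|(⟨rfl,rfl,rfl⟩|⟨rfl,rfl,rfl⟩|⟨rfl,rfl,rfl⟩|⟨rfl,rfl,rfl⟩|⟨rfl,rfl,rfl⟩|⟨rfl,rfl,rfl⟩)|(⟨rfl,rfl,rfl⟩|⟨rfl,rfl,rfl⟩|⟨rfl,rfl,rfl⟩|⟨rfl,rfl,rfl⟩|⟨rfl,rfl,rfl⟩|⟨rfl,rfl,rfl⟩)|(⟨rfl,rfl,rfl⟩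|⟨rfl,rfl,rfl⟩|⟨rfl,rfl,rfl⟩|⟨rfl,rfl,rfl⟩|⟨rfl,rfl,rfl⟩|⟨rfl,rfl,rfl⟩)|(⟨rfl,rfl,rfl⟩|⟨rfl,rfl,rfl⟩|⟨rfl,rfl,rfl⟩|⟨rfl,rfl,rfl⟩|⟨rfl,rfl,rfl⟩|⟨rfl,rfl,rfl⟩)|(⟨rfl,rfl,rfl⟩|⟨rfl,rfl,rfl⟩|⟨rfl,rfl,rfl⟩|⟨rfl,rfl,rfl⟩|⟨rfl,rfl,rfl⟩|⟨rfl,rfl,rfl⟩)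
      · exact Or.inl (rfl)
      · exact Or.inl (st16_p132 _ _ _)
      · exact Or.inl (st16_p213 _ _ _)
      · exact Or.inl (st16_p231 _ _ _)
      · exact Or.inl (st16_p312 _ _ _)
      · exact Or.inl (st16_p321 _ _ _)
      · exact Or.inr (Or.inl (rfl))
      · exact Or.inr (Or.inl (st16_p132 _ _ _))
      · exact Or.inr (Or.inl (st16_p213 _ _ _))
      · exact Or.inr (Or.inl (st16_p231 _ _ _))
      · exact Or.inr (Or.inl (st16_p312 _ _ _))
      · exact Or.inr (Or.inl (st16_p321 _ _ _))
      · exact Or.inr (Or.inr (Or.inl (rfl)))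
      · exact Or.inr (Or.inr (Or.inl (st16_p132 _ _ _)))
      · exact Or.inr (Or.inr (Or.inl (st16_p213 _ _ _)))
      · exact Or.inr (Or.inr (Or.inl (st16_p231 _ _ _)))
      · exact Or.inr (Or.inr (Or.inl (st16_p312 _ _ _)))
      · exact Or.inr (Or.inr (Or.inl (st16_p321 _ _ _)))
      · exact Or.inr (Or.inr (Or.inr (Or.inl (rfl))))
      · exact Or.inr (Or.inr (Or.inr (Or.inl (st16_p132 _ _ _))))
      · exact Or.inr (Or.inr (Or.inr (Or.inl (st16_p213 _ _ _))))
      · exact Or.inr (Or.inr (Or.inr (Or.inl (st16_p231 _ _ _))))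
      · exact Or.inr (Or.inr (Or.inr (Or.inl (st16_p312 _ _ _))))
      · exact Or.inr (Or.inr (Or.inr (Or.inl (st16_p321 _ _ _))))
      · exact Or.inr (Or.inr (Or.inr (Or.inr (Or.inl (rfl)))))
      · exact Or.inr (Or.inr (Or.inr (Or.inr (Or.inl (st16_p132 _ _ _)))))
      · exact Or.inr (Or.inr (Or.inr (Or.inr (Or.inl (st16_p213 _ _ _)))))
      · exact Or.inr (Or.inr (Or.inr (Or.inr (Or.inl (st16_p231 _ _ _)))))
      · exact Or.inr (Or.inr (Or.inr (Or.inr (Or.inl (st16_p312 _ _ _)))))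
      · exact Or.inr (Or.inr (Or.inr (Or.inr (Or.inl (st16_p321 _ _ _)))))
      · exact Or.inr (Or.inr (Or.inr (Or.inr (Or.inr (Or.inl (rfl))))))
      · exact Or.inr (Or.inr (Or.inr (Or.inr (Or.inr (Or.inl (st16_p132 _ _ _))))))
      · exact Or.inr (Or.inr (Or.inr (Or.inr (Or.inr (Or.inl (st16_p213 _ _ _))))))
      · exact Or.inr (Or.inr (Or.inr (Or.inr (Or.inr (Or.inl (st16_p231 _ _ _))))))
      · exact Or.inr (Or.inr (Or.inr (Or.inr (Or.inr (Or.inl (st16_p312 _ _ _))))))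
      · exact Or.inr (Or.inr (Or.inr (Or.inr (Or.inr (Or.inl (st16_p321 _ _ _))))))
      · exact Or.inr (Or.inr (Or.inr (Or.inr (Or.inr (Or.inr (Or.inl (rfl)))))))
      · exact Or.inr (Or.inr (Or.inr (Or.inr (Or.inr (Or.inr (Or.inl (st16_p132 _ _ _)))))))
      · exact Or.inr (Or.inr (Or.inr (Or.inr (Or.inr (Or.inr (Or.inl (st16_p213 _ _ _)))))))
      · exact Or.inr (Or.inr (Or.inr (Or.inr (Or.inr (Or.inr (Or.inl (st16_p231 _ _ _)))))))
      · exact Or.inr (Or.inr (Or.inr (Or.inr (Or.inr (Or.inr (Or.inl (st16_p312 _ _ _)))))))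
      · exact Or.inr (Or.inr (Or.inr (Or.inr (Or.inr (Or.inr (Or.inl (st16_p321 _ _ _)))))))
      · exact Or.inr (Or.inr (Or.inr (Or.inr (Or.inr (Or.inr (Or.inr (Or.inl (rfl))))))))
      · exact Or.inr (Or.inr (Or.inr (Or.inr (Or.inr (Or.inr (Or.inr (Or.inl (st16_p132 _ _ _))))))))
      · exact Or.inr (Or.inr (Or.inr (Or.inr (Or.inr (Or.inr (Or.inr (Or.inl (st16_p213 _ _ _))))))))
      · exact Or.inr (Or.inr (Or.inr (Or.inr (Or.inr (Or.inr (Or.inr (Or.inl (st16_p231 _ _ _))))))))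
      · exact Or.inr (Or.inr (Or.inr (Or.inr (Or.inr (Or.inr (Or.inr (Or.inl (st16_p312 _ _ _))))))))
      · exact Or.inr (Or.inr (Or.inr (Or.inr (Or.inr (Or.inr (Or.inr (Or.inl (st16_p321 _ _ _))))))))
      · exact Or.inr (Or.inr (Or.inr (Or.inr (Or.inr (Or.inr (Or.inr (Or.inr (Or.inl (rfl)))))))))
      · exact Or.inr (Or.inr (Or.inr (Or.inr (Or.inr (Or.inr (Or.inr (Or.inr (Or.inl (st16_p132 _ _ _)))))))))
      · exact Or.inr (Or.inr (Or.inr (Or.inr (Or.inr (Or.inr (Or.inr (Or.inr (Or.inl (st16_p213 _ _ _)))))))))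
      · exact Or.inr (Or.inr (Or.inr (Or.inr (Or.inr (Or.inr (Or.inr (Or.inr (Or.inl (st16_p231 _ _ _)))))))))
      · exact Or.inr (Or.inr (Or.inr (Or.inr (Or.inr (Or.inr (Or.inr (Or.inr (Or.inl (st16_p312 _ _ _)))))))))
      · exact Or.inr (Or.inr (Or.inr (Or.inr (Or.inr (Or.inr (Or.inr (Or.inr (Or.inl (st16_p321 _ _ _)))))))))
      · exact Or.inr (Or.inr (Or.inr (Or.inr (Or.inr (Or.inr (Or.inr (Or.inr (Or.inr (Or.inl (rfl))))))))))
      · exact Or.inr (Or.inr (Or.inr (Or.inr (Or.inr (Or.inr (Or.inr (Or.inr (Or.inr (Or.inl (st16_p132 _ _ _))))))))))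
      · exact Or.inr (Or.inr (Or.inr (Or.inr (Or.inr (Or.inr (Or.inr (Or.inr (Or.inr (Or.inl (st16_p213 _ _ _))))))))))
      · exact Or.inr (Or.inr (Or.inr (Or.inr (Or.inr (Or.inr (Or.inr (Or.inr (Or.inr (Or.inl (st16_p231 _ _ _))))))))))
      · exact Or.inr (Or.inr (Or.inr (Or.inr (Or.inr (Or.inr (Or.inr (Or.inr (Or.inr (Or.inl (st16_p312 _ _ _))))))))))
      · exact Or.inr (Or.inr (Or.inr (Or.inr (Or.inr (Or.inr (Or.inr (Or.inr (Or.inr (Or.inl (st16_p321 _ _ _))))))))))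
      · exact Or.inr (Or.inr (Or.inr (Or.inr (Or.inr (Or.inr (Or.inr (Or.inr (Or.inr (Or.inr (Or.inl (rfl)))))))))))
      · exact Or.inr (Or.inr (Or.inr (Or.inr (Or.inr (Or.inr (Or.inr (Or.inr (Or.inr (Or.inr (Or.inl (st16_p132 _ _ _)))))))))))
      · exact Or.inr (Or.inr (Or.inr (Or.inr (Or.inr (Or.inr (Or.inr (Or.inr (Or.inr (Or.inr (Or.inl (st16_p213 _ _ _)))))))))))
      · exact Or.inr (Or.inr (Or.inr (Or.inr (Or.inr (Or.inr (Or.inr (Or.inr (Or.inr (Or.inr (Or.inl (st16_p231 _ _ _)))))))))))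
      · exact Or.inr (Or.inr (Or.inr (Or.inr (Or.inr (Or.inr (Or.inr (Or.inr (Or.inr (Or.inr (Or.inl (st16_p312 _ _ _)))))))))))
      · exact Or.inr (Or.inr (Or.inr (Or.inr (Or.inr (Or.inr (Or.inr (Or.inr (Or.inr (Or.inr (Or.inl (st16_p321 _ _ _)))))))))))
      · exact Or.inr (Or.inr (Or.inr (Or.inr (Or.inr (Or.inr (Or.inr (Or.inr (Or.inr (Or.inr (Or.inr (Or.inl (rfl))))))))))))
      · exact Or.inr (Or.inr (Or.inr (Or.inr (Or.inr (Or.inr (Or.inr (Or.inr (Or.inr (Or.inr (Or.inr (Or.inl (st16_p132 _ _ _))))))))))))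
      · exact Or.inr (Or.inr (Or.inr (Or.inr (Or.inr (Or.inr (Or.inr (Or.inr (Or.inr (Or.inr (Or.inr (Or.inl (st16_p213 _ _ _))))))))))))
      · exact Or.inr (Or.inr (Or.inr (Or.inr (Or.inr (Or.inr (Or.inr (Or.inr (Or.inr (Or.inr (Or.inr (Or.inl (st16_p231 _ _ _))))))))))))
      · exact Or.inr (Or.inr (Or.inr (Or.inr (Or.inr (Or.inr (Or.inr (Or.inr (Or.inr (Or.inr (Or.inr (Or.inl (st16_p312 _ _ _))))))))))))
      · exact Or.inr (Or.inr (Or.inr (Or.inr (Or.inr (Or.inr (Or.inr (Or.inr (Or.inr (Or.inr (Or.inr (Or.inl (st16_p321 _ _ _))))))))))))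
      · exact Or.inr (Or.inr (Or.inr (Or.inr (Or.inr (Or.inr (Or.inr (Or.inr (Or.inr (Or.inr (Or.inr (Or.inr (Or.inl (rfl)))))))))))))
      · exact Or.inr (Or.inr (Or.inr (Or.inr (Or.inr (Or.inr (Or.inr (Or.inr (Or.inr (Or.inr (Or.inr (Or.inr (Or.inl (st16_p132 _ _ _)))))))))))))
      · exact Or.inr (Or.inr (Or.inr (Or.inr (Or.inr (Or.inr (Or.inr (Or.inr (Or.inr (Or.inr (Or.inr (Or.inr (Or.inl (st16_p213 _ _ _)))))))))))))
      · exact Or.inr (Or.inr (Or.inr (Or.inr (Or.inr (Or.inr (Or.inr (Or.inr (Or.inr (Or.inr (Or.inr (Or.inr (Or.inl (st16_p231 _ _ _)))))))))))))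
      · exact Or.inr (Or.inr (Or.inr (Or.inr (Or.inr (Or.inr (Or.inr (Or.inr (Or.inr (Or.inr (Or.inr (Or.inr (Or.inl (st16_p312 _ _ _)))))))))))))
      · exact Or.inr (Or.inr (Or.inr (Or.inr (Or.inr (Or.inr (Or.inr (Or.inr (Or.inr (Or.inr (Or.inr (Or.inr (Or.inl (st16_p321 _ _ _)))))))))))))
      · exact Or.inr (Or.inr (Or.inr (Or.inr (Or.inr (Or.inr (Or.inr (Or.inr (Or.inr (Or.inr (Or.inr (Or.inr (Or.inr (Or.inl (rfl))))))))))))))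
      · exact Or.inr (Or.inr (Or.inr (Or.inr (Or.inr (Or.inr (Or.inr (Or.inr (Or.inr (Or.inr (Or.inr (Or.inr (Or.inr (Or.inl (st16_p132 _ _ _))))))))))))))
      · exact Or.inr (Or.inr (Or.inr (Or.inr (Or.inr (Or.inr (Or.inr (Or.inr (Or.inr (Or.inr (Or.inr (Or.inr (Or.inr (Or.inl (st16_p213 _ _ _))))))))))))))
      · exact Or.inr (Or.inr (Or.inr (Or.inr (Or.inr (Or.inr (Or.inr (Or.inr (Or.inr (Or.inr (Or.inr (Or.inr (Or.inr (Or.inl (st16_p231 _ _ _))))))))))))))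
      · exact Or.inr (Or.inr (Or.inr (Or.inr (Or.inr (Or.inr (Or.inr (Or.inr (Or.inr (Or.inr (Or.inr (Or.inr (Or.inr (Or.inl (st16_p312 _ _ _))))))))))))))
      · exact Or.inr (Or.inr (Or.inr (Or.inr (Or.inr (Or.inr (Or.inr (Or.inr (Or.inr (Or.inr (Or.inr (Or.inr (Or.inr (Or.inl (st16_p321 _ _ _))))))))))))))
      · exact Or.inr (Or.inr (Or.inr (Or.inr (Or.inr (Or.inr (Or.inr (Or.inr (Or.inr (Or.inr (Or.inr (Or.inr (Or.inr (Or.inr (Or.inl (rfl)))))))))))))))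
      · exact Or.inr (Or.inr (Or.inr (Or.inr (Or.inr (Or.inr (Or.inr (Or.inr (Or.inr (Or.inr (Or.inr (Or.inr (Or.inr (Or.inr (Or.inl (st16_p132 _ _ _)))))))))))))))
      · exact Or.inr (Or.inr (Or.inr (Or.inr (Or.inr (Or.inr (Or.inr (Or.inr (Or.inr (Or.inr (Or.inr (Or.inr (Or.inr (Or.inr (Or.inl (st16_p213 _ _ _)))))))))))))))
      · exact Or.inr (Or.inr (Or.inr (Or.inr (Or.inr (Or.inr (Or.inr (Or.inr (Or.inr (Or.inr (Or.inr (Or.inr (Or.inr (Or.inr (Or.inl (st16_p231 _ _ _)))))))))))))))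
      · exact Or.inr (Or.inr (Or.inr (Or.inr (Or.inr (Or.inr (Or.inr (Or.inr (Or.inr (Or.inr (Or.inr (Or.inr (Or.inr (Or.inr (Or.inl (st16_p312 _ _ _)))))))))))))))
      · exact Or.inr (Or.inr (Or.inr (Or.inr (Or.inr (Or.inr (Or.inr (Or.inr (Or.inr (Or.inr (Or.inr (Or.inr (Or.inr (Or.inr (Or.inl (st16_p321 _ _ _)))))))))))))))
      · exact Or.inr (Or.inr (Or.inr (Or.inr (Or.inr (Or.inr (Or.inr (Or.inr (Or.inr (Or.inr (Or.inr (Or.inr (Or.inr (Or.inr (Or.inr (Or.inl (rfl))))))))))))))))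
      · exact Or.inr (Or.inr (Or.inr (Or.inr (Or.inr (Or.inr (Or.inr (Or.inr (Or.inr (Or.inr (Or.inr (Or.inr (Or.inr (Or.inr (Or.inr (Or.inl (st16_p132 _ _ _))))))))))))))))
      · exact Or.inr (Or.inr (Or.inr (Or.inr (Or.inr (Or.inr (Or.inr (Or.inr (Or.inr (Or.inr (Or.inr (Or.inr (Or.inr (Or.inr (Or.inr (Or.inl (st16_p213 _ _ _))))))))))))))))
      · exact Or.inr (Or.inr (Or.inr (Or.inr (Or.inr (Or.inr (Or.inr (Or.inr (Or.inr (Or.inr (Or.inr (Or.inr (Or.inr (Or.inr (Or.inr (Or.inl (st16_p231 _ _ _))))))))))))))))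
      · exact Or.inr (Or.inr (Or.inr (Or.inr (Or.inr (Or.inr (Or.inr (Or.inr (Or.inr (Or.inr (Or.inr (Or.inr (Or.inr (Or.inr (Or.inr (Or.inl (st16_p312 _ _ _))))))))))))))))
      · exact Or.inr (Or.inr (Or.inr (Or.inr (Or.inr (Or.inr (Or.inr (Or.inr (Or.inr (Or.inr (Or.inr (Or.inr (Or.inr (Or.inr (Or.inr (Or.inl (st16_p321 _ _ _))))))))))))))))
      · exact Or.inr (Or.inr (Or.inr (Or.inr (Or.inr (Or.inr (Or.inr (Or.inr (Or.inr (Or.inr (Or.inr (Or.inr (Or.inr (Or.inr (Or.inr (Or.inr (Or.inl (rfl)))))))))))))))))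
      · exact Or.inr (Or.inr (Or.inr (Or.inr (Or.inr (Or.inr (Or.inr (Or.inr (Or.inr (Or.inr (Or.inr (Or.inr (Or.inr (Or.inr (Or.inr (Or.inr (Or.inl (st16_p132 _ _ _)))))))))))))))))
      · exact Or.inr (Or.inr (Or.inr (Or.inr (Or.inr (Or.inr (Or.inr (Or.inr (Or.inr (Or.inr (Or.inr (Or.inr (Or.inr (Or.inr (Or.inr (Or.inr (Or.inl (st16_p213 _ _ _)))))))))))))))))
      · exact Or.inr (Or.inr (Or.inr (Or.inr (Or.inr (Or.inr (Or.inr (Or.inr (Or.inr (Or.inr (Or.inr (Or.inr (Or.inr (Or.inr (Or.inr (Or.inr (Or.inl (st16_p231 _ _ _)))))))))))))))))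
      · exact Or.inr (Or.inr (Or.inr (Or.inr (Or.inr (Or.inr (Or.inr (Or.inr (Or.inr (Or.inr (Or.inr (Or.inr (Or.inr (Or.inr (Or.inr (Or.inr (Or.inl (st16_p312 _ _ _)))))))))))))))))
      · exact Or.inr (Or.inr (Or.inr (Or.inr (Or.inr (Or.inr (Or.inr (Or.inr (Or.inr (Or.inr (Or.inr (Or.inr (Or.inr (Or.inr (Or.inr (Or.inr (Or.inl (st16_p321 _ _ _)))))))))))))))))
      · exact Or.inr (Or.inr (Or.inr (Or.inr (Or.inr (Or.inr (Or.inr (Or.inr (Or.inr (Or.inr (Or.inr (Or.inr (Or.inr (Or.inr (Or.inr (Or.inr (Or.inr (rfl)))))))))))))))))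
      · exact Or.inr (Or.inr (Or.inr (Or.inr (Or.inr (Or.inr (Or.inr (Or.inr (Or.inr (Or.inr (Or.inr (Or.inr (Or.inr (Or.inr (Or.inr (Or.inr (Or.inr (st16_p132 _ _ _)))))))))))))))))
      · exact Or.inr (Or.inr (Or.inr (Or.inr (Or.inr (Or.inr (Or.inr (Or.inr (Or.inr (Or.inr (Or.inr (Or.inr (Or.inr (Or.inr (Or.inr (Or.inr (Or.inr (st16_p213 _ _ _)))))))))))))))))
      · exact Or.inr (Or.inr (Or.inr (Or.inr (Or.inr (Or.inr (Or.inr (Or.inr (Or.inr (Or.inr (Or.inr (Or.inr (Or.inr (Or.inr (Or.inr (Or.inr (Or.inr (st16_p231 _ _ _)))))))))))))))))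
      · exact Or.inr (Or.inr (Or.inr (Or.inr (Or.inr (Or.inr (Or.inr (Or.inr (Or.inr (Or.inr (Or.inr (Or.inr (Or.inr (Or.inr (Or.inr (Or.inr (Or.inr (st16_p312 _ _ _)))))))))))))))))
      · exact Or.inr (Or.inr (Or.inr (Or.inr (Or.inr (Or.inr (Or.inr (Or.inr (Or.inr (Or.inr (Or.inr (Or.inr (Or.inr (Or.inr (Or.inr (Or.inr (Or.inr (st16_p321 _ _ _)))))))))))))))))
    · intro hs
      rcases hs with h|h|h|h|h|h|h|h|h|h|h|h|h|h|h|h|h|h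
      · exact Or.inl (st16_sets_to_tri hPtinj 0 3 6 hij hik hjk h)
      · exact Or.inr (Or.inl (st16_sets_to_tri hPtinj 0 4 5 hij hik hjk h))
      · exact Or.inr (Or.inr (Or.inl (st16_sets_to_tri hPtinj 0 7 9 hij hik hjk h)))
      · exact Or.inr (Or.inr (Or.inr (Or.inl (st16_sets_to_tri hPtinj 0 8 12 hij hik hjk h))))
      · exact Or.inr (Or.inr (Or.inr (Or.inr (Or.inl (st16_sets_to_tri hPtinj 0 10 11 hij hik hjk h)))))
      · exact Or.inr (Or.inr (Or.inr (Or.inr (Or.inr (Or.inl (st16_sets_to_tri hPtinj 0 13 14 hij hik hjk h))))))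
      · exact Or.inr (Or.inr (Or.inr (Or.inr (Or.inr (Or.inr (Or.inl (st16_sets_to_tri hPtinj 1 3 4 hij hik hjk h)))))))
      · exact Or.inr (Or.inr (Or.inr (Or.inr (Or.inr (Or.inr (Or.inr (Or.inl (st16_sets_to_tri hPtinj 1 5 8 hij hik hjk h))))))))
      · exact Or.inr (Or.inr (Or.inr (Or.inr (Or.inr (Or.inr (Or.inr (Or.inr (Or.inl (st16_sets_to_tri hPtinj 1 6 14 hij hik hjk h)))))))))
      · exact Or.inr (Or.inr (Or.inr (Or.inr (Or.inr (Or.inr (Or.inr (Or.inr (Or.inr (Or.inl (st16_sets_to_tri hPtinj 1 7 10 hij hik hjk h))))))))))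
      · exact Or.inr (Or.inr (Or.inr (Or.inr (Or.inr (Or.inr (Or.inr (Or.inr (Or.inr (Or.inr (Or.inl (st16_sets_to_tri hPtinj 1 9 11 hij hik hjk h)))))))))))
      · exact Or.inr (Or.inr (Or.inr (Or.inr (Or.inr (Or.inr (Or.inr (Or.inr (Or.inr (Or.inr (Or.inr (Or.inl (st16_sets_to_tri hPtinj 1 12 13 hij hik hjk h))))))))))))
      · exact Or.inr (Or.inr (Or.inr (Or.inr (Or.inr (Or.inr (Or.inr (Or.inr (Or.inr (Or.inr (Or.inr (Or.inr (Or.inl (st16_sets_to_tri hPtinj 2 3 5 hij hik hjk h)))))))))))))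
      · exact Or.inr (Or.inr (Or.inr (Or.inr (Or.inr (Or.inr (Or.inr (Or.inr (Or.inr (Or.inr (Or.inr (Or.inr (Or.inr (Or.inl (st16_sets_to_tri hPtinj 2 4 7 hij hik hjk h))))))))))))))
      · exact Or.inr (Or.inr (Or.inr (Or.inr (Or.inr (Or.inr (Or.inr (Or.inr (Or.inr (Or.inr (Or.inr (Or.inr (Or.inr (Or.inr (Or.inl (st16_sets_to_tri hPtinj 2 6 11 hij hik hjk h)))))))))))))))
      · exact Or.inr (Or.inr (Or.inr (Or.inr (Or.inr (Or.inr (Or.inr (Or.inr (Or.inr (Or.inr (Or.inr (Or.inr (Or.inr (Or.inr (Or.inr (Or.inl (st16_sets_to_tri hPtinj 2 8 13 hij hik hjk h))))))))))))))))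
      · exact Or.inr (Or.inr (Or.inr (Or.inr (Or.inr (Or.inr (Or.inr (Or.inr (Or.inr (Or.inr (Or.inr (Or.inr (Or.inr (Or.inr (Or.inr (Or.inr (Or.inl (st16_sets_to_tri hPtinj 2 9 10 hij hik hjk h)))))))))))))))))
      · exact Or.inr (Or.inr (Or.inr (Or.inr (Or.inr (Or.inr (Or.inr (Or.inr (Or.inr (Or.inr (Or.inr (Or.inr (Or.inr (Or.inr (Or.inr (Or.inr (Or.inr (st16_sets_to_tri hPtinj 2 12 14 hij hik hjk h)))))))))))))))))
  constructor
  · intro p q r hp hq hr hpq hpr hqr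
    obtain ⟨i, rfl⟩ := (memD p).1 hp
    obtain ⟨j, rfl⟩ := (memD q).1 hq
    obtain ⟨k, rfl⟩ := (memD r).1 hr
    exact FullIff i j k (fun h => hpq (by rw [h])) (fun h => hpr (by rw [h]))
      (fun h => hqr (by rw [h]))
  · intro f hbij hpres
    have hmem : ∀ i : Fin 15, st16PtR α β i ∈ Dconf α β := fun i => (memD _).2 ⟨i, rfl⟩
    choose σ hσ using fun i : Fin 15 => (memD (f (st16PtR α β i))).1 (hbij.mapsTo (hmem i))
    have σinj : Function.Injective σ := by
      intro i j h
      apply hPtinj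
      apply hbij.injOn (hmem i) (hmem j)
      rw [hσ i, hσ j, h]
    have hmono : ∀ i j k : Fin 15, st16Good i j k → st16Good (σ i) (σ j) (σ k) := by
      intro i j k hg
      obtain ⟨hij, hik, hjk⟩ := st16Good_distinct i j k hg
      have hcol : ProjCollinear {st16PtR α β i, st16PtR α β j, st16PtR α β k} :=
        (keyIff i j k).2 ((st16Master t u i j k hij hik hjk).2 hg)
      have hcol2 := (hpres _ (hmem i) _ (hmem j) _ (hmem k)).1 hcol
      rw [hσ i, hσ j, hσ k] at hcol2
      exact (st16Master t u (σ i) (σ j) (σ k) (fun h => hij (σinj h))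
        (fun h => hik (σinj h)) (fun h => hjk (σinj h))).1 ((keyIff _ _ _).1 hcol2)
    have hcard : ∀ x : Fin 15, (st16NbF x).card ≤ (st16NbF (σ x)).card := by
      intro x
      apply Finset.card_le_card_of_injOn σ
      · intro y hy
        simp only [st16NbF, Finset.mem_coe, Finset.mem_filter, Finset.mem_univ, true_and] at hy ⊢
        exact st16Good_adj _ _ _ (hmono _ _ _ (st16Adj_good x y hy))
      · exact fun a _ b _ h => σinj h
    have hV : ∀ x : Fin 15, (st16NbF x).card = 12 → σ x = 0 ∨ σ x = 1 ∨ σ x = 2 := by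
      intro x hx
      apply st16Nb_card.2
      calc 12 = (st16NbF x).card := hx.symm
        _ ≤ _ := hcard x
    have h0 := hV 0 st16Nb_card.1.1
    have h1 := hV 1 st16Nb_card.1.2.1
    have h2 := hV 2 st16Nb_card.1.2.2
    have d01 : σ 0 ≠ σ 1 := fun h => absurd (σinj h) (by decide)
    have d02 : σ 0 ≠ σ 2 := fun h => absurd (σinj h) (by decide)
    have d12 : σ 1 ≠ σ 2 := fun h => absurd (σinj h) (by decide)
    have himg : f '' ({V₁, V₂, V₃} : Set ProjPlaneR) =
        {st16PtR α β (σ 0), st16PtR α β (σ 1), st16PtR α β (σ 2)} := by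
      rw [show ({V₁, V₂, V₃} : Set ProjPlaneR)
          = {st16PtR α β 0, st16PtR α β 1, st16PtR α β 2} from rfl]
      rw [Set.image_insert_eq, Set.image_insert_eq, Set.image_singleton,
        hσ 0, hσ 1, hσ 2]
    rw [himg]
    have target : ({V₁, V₂, V₃} : Set ProjPlaneR)
        = {st16PtR α β 0, st16PtR α β 1, st16PtR α β 2} := rfl
    rw [target]
    rcases h0 with h0 | h0 | h0 <;> rcases h1 with h1 | h1 | h1 <;>
      rcases h2 with h2 | h2 | h2 <;>
      rw [h0, h1, h2] <;>
      first
        | exact absurd (h0.trans h1.symm) d01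
        | exact absurd (h0.trans h2.symm) d02
        | exact absurd (h1.trans h2.symm) d12
        | rfl
        | exact st16_p132 _ _ _
        | exact st16_p213 _ _ _
        | exact st16_p231 _ _ _
        | exact st16_p312 _ _ _
        | exact st16_p321 _ _ _

/--
For `α, β ∈ {−1,1}`:
(i) a three-element subset of `D_{α,β}` is collinear in `ℙ²(ℝ)` iff it is one of the
eighteen listed triples; and
(ii) every collinearity-preserving bijection `f` of `D_{α,β}` satisfies
`f({V₁,V₂,V₃}) = {V₁,V₂,V₃}`.
-/
theorem stmt_16 (α β : ℝ) (hα : α = 1 ∨ α = -1) (hβ : β = 1 ∨ β = -1) :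
    (∀ p q r : ProjPlaneR, p ∈ Dconf α β → q ∈ Dconf α β → r ∈ Dconf α β →
      p ≠ q → p ≠ r → q ≠ r →
      (ProjCollinear {p, q, r} ↔
        (({p, q, r} : Set ProjPlaneR) = {V₁, S₁, S₄} ∨
         ({p, q, r} : Set ProjPlaneR) = {V₁, S₂, S₃} ∨
         ({p, q, r} : Set ProjPlaneR) = {V₁, S₅, S₇ α} ∨
         ({p, q, r} : Set ProjPlaneR) = {V₁, S₆, S₁₀ β} ∨
         ({p, q, r} : Set ProjPlaneR) = {V₁, S₈ α, S₉ α} ∨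
         ({p, q, r} : Set ProjPlaneR) = {V₁, S₁₁ β, S₁₂ β} ∨
         ({p, q, r} : Set ProjPlaneR) = {V₂, S₁, S₂} ∨
         ({p, q, r} : Set ProjPlaneR) = {V₂, S₃, S₆} ∨
         ({p, q, r} : Set ProjPlaneR) = {V₂, S₄, S₁₂ β} ∨
         ({p, q, r} : Set ProjPlaneR) = {V₂, S₅, S₈ α} ∨
         ({p, q, r} : Set ProjPlaneR) = {V₂, S₇ α, S₉ α} ∨
         ({p, q, r} : Set ProjPlaneR) = {V₂, S₁₀ β, S₁₁ β} ∨
         ({p, q, r} : Set ProjPlaneR) = {V₃, S₁, S₃} ∨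
         ({p, q, r} : Set ProjPlaneR) = {V₃, S₂, S₅} ∨
         ({p, q, r} : Set ProjPlaneR) = {V₃, S₄, S₉ α} ∨
         ({p, q, r} : Set ProjPlaneR) = {V₃, S₆, S₁₁ β} ∨
         ({p, q, r} : Set ProjPlaneR) = {V₃, S₇ α, S₈ α} ∨
         ({p, q, r} : Set ProjPlaneR) = {V₃, S₁₀ β, S₁₂ β}))) ∧
    (∀ f : ProjPlaneR → ProjPlaneR,
      Set.BijOn f (Dconf α β) (Dconf α β) →
      (∀ p ∈ Dconf α β, ∀ q ∈ Dconf α β, ∀ r ∈ Dconf α β,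
        (ProjCollinear {p, q, r} ↔ ProjCollinear {f p, f q, f r})) →
      f '' ({V₁, V₂, V₃} : Set ProjPlaneR) = {V₁, V₂, V₃}) := by
  rcases hα with rfl | rfl <;> rcases hβ with rfl | rfl
  · exact st16_main true true 1 1 (by simp [st16Sg]) (by simp [st16Sg])
  · exact st16_main true false 1 (-1) (by simp [st16Sg]) (by simp [st16Sg])
  · exact st16_main false true (-1) 1 (by simp [st16Sg]) (by simp [st16Sg])
  · exact st16_main false false (-1) (-1) (by simp [st16Sg]) (by simp [st16Sg])

end
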